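/- Let m, n be integers with (m,n) ≠ (0,0), set ω(y,z) = m y + n z, let F⁰ : ℝ → ℝ be continuously differentiable, and let Fx, Fy, Fz, G : ℝ → ℝ be continuously differentiable. Define on ℝ³ the vector fields B⁰(x,y,z) = (0, 0, F⁰(x)) and B¹(x,y,z) = (Fx(x) cos ω, Fy(x) sin ω, Fz(x) sin ω), and the scalar Π¹(x,y,z) = G(x) sin ω. Then the pair of first-order equations ∇·B¹ = 0 and ∇Π¹ = (B⁰·∇)B¹ + (B¹·∇)B⁰ holds at every point of ℝ³ if and only if for every x: (i) Fx′ + m·Fy + n·Fz = 0; (ii) G′ = −n·F⁰·Fx; (iii) m·G = n·F⁰·Fy; (iv) n·G = n·F⁰·Fz + F⁰′·Fx. -/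

import Mathlib

open Matrix

noncomputable section

/-- Points of ℝ³ as functions `Fin 3 → ℝ`; coordinates `(x, y, z) = (p 0, p 1, p 2)`. -/
abbrev E3 := Fin 3 → ℝ

/-- Standard basis vectors of ℝ³. -/
def e3 (i : Fin 3) : E3 := Pi.single i 1

/-- Euclidean gradient of a scalar field on ℝ³. -/
def grad3 (f : E3 → ℝ) (p : E3) : E3 := fun i => fderiv ℝ f p (e3 i)

/-- Divergence of a vector field on ℝ³. -/
def div3 (B : E3 → E3) (p : E3) : ℝ := ∑ i : Fin 3, fderiv ℝ (fun q => B q i) p (e3 i)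

lemma hasF_proj (i : Fin 3) (p : E3) (f : ℝ → ℝ) (hf : DifferentiableAt ℝ f (p i)) :
    HasFDerivAt (fun q : E3 => f (q i)) (deriv f (p i) • (ContinuousLinearMap.proj i : E3 →L[ℝ] ℝ)) p :=
  hf.hasDerivAt.comp_hasFDerivAt p ((ContinuousLinearMap.proj i : E3 →L[ℝ] ℝ)).hasFDerivAt

lemma hasF_omega (m n : ℝ) (p : E3) :
    HasFDerivAt (fun q : E3 => m * q 1 + n * q 2)
      (m • (ContinuousLinearMap.proj 1 : E3 →L[ℝ] ℝ) + n • (ContinuousLinearMap.proj 2 : E3 →L[ℝ] ℝ)) p := by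
  have h1 := ((ContinuousLinearMap.proj 1 : E3 →L[ℝ] ℝ)).hasFDerivAt (x := p)
  have h2 := ((ContinuousLinearMap.proj 2 : E3 →L[ℝ] ℝ)).hasFDerivAt (x := p)
  exact (h1.const_smul m).add (h2.const_smul n) |>.congr_fderiv (by ext v; simp [smul_eq_mul])

lemma fderiv_mode_apply (m n : ℝ) (f s s' : ℝ → ℝ) (hf : Differentiable ℝ f)
    (hs : ∀ t, HasDerivAt s (s' t) t) (p v : E3) :
    fderiv ℝ (fun q : E3 => f (q 0) * s (m * q 1 + n * q 2)) p v
      = deriv f (p 0) * v 0 * s (m * p 1 + n * p 2)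
        + f (p 0) * s' (m * p 1 + n * p 2) * (m * v 1 + n * v 2) := by
  have h1 := hasF_proj 0 p f (hf _)
  have h2 := ((hs (m * p 1 + n * p 2)).comp_hasFDerivAt p (hasF_omega m n p))
  simp only [Function.comp_def] at h2
  have h := h1.mul h2
  rw [HasFDerivAt.fderiv (f := fun q : E3 => f (q 0) * s (m * q 1 + n * q 2)) h]
  simp [smul_eq_mul]
  ring

lemma diff_mode (m n : ℝ) (f s s' : ℝ → ℝ) (hf : Differentiable ℝ f)
    (hs : ∀ t, HasDerivAt s (s' t) t) (p : E3) :
    DifferentiableAt ℝ (fun q : E3 => f (q 0) * s (m * q 1 + n * q 2)) p := by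
  have h1 := hasF_proj 0 p f (hf _)
  have h2 := ((hs (m * p 1 + n * p 2)).comp_hasFDerivAt p (hasF_omega m n p))
  simp only [Function.comp_def] at h2
  exact (h1.mul h2).differentiableAt

lemma e3_val : (e3 0 0 = 1 ∧ e3 0 1 = 0 ∧ e3 0 2 = 0) ∧ (e3 1 0 = 0 ∧ e3 1 1 = 1 ∧ e3 1 2 = 0)
    ∧ (e3 2 0 = 0 ∧ e3 2 1 = 0 ∧ e3 2 2 = 1) := by
  refine ⟨⟨?_, ?_, ?_⟩, ⟨?_, ?_, ?_⟩, ⟨?_, ?_, ?_⟩⟩ <;> simp [e3, Pi.single_apply]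

lemma fin3_mk_two (h : 2 < 3) : (⟨2, h⟩ : Fin 3) = 2 := rfl

/-- The first-order ideal MHD equilibrium equations `∇·B¹ = 0`,
`∇Π¹ = (B⁰·∇)B¹ + (B¹·∇)B⁰` for the single-mode perturbation with `ω = m y + n z`
hold everywhere if and only if the ODE system (4.4a)–(4.4d) holds for every `x`. -/
theorem statement10 (m n : ℤ) (hmn : (m, n) ≠ (0, 0))
    (F0 Fx Fy Fz G : ℝ → ℝ)
    (hF0 : ContDiff ℝ 1 F0) (hFx : ContDiff ℝ 1 Fx) (hFy : ContDiff ℝ 1 Fy)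
    (hFz : ContDiff ℝ 1 Fz) (hG : ContDiff ℝ 1 G)
    (B0 B1 : E3 → E3) (Pi1 : E3 → ℝ)
    (hB0 : ∀ p : E3, B0 p = ![0, 0, F0 (p 0)])
    (hB1 : ∀ p : E3, B1 p =
      ![Fx (p 0) * Real.cos ((m : ℝ) * p 1 + (n : ℝ) * p 2),
        Fy (p 0) * Real.sin ((m : ℝ) * p 1 + (n : ℝ) * p 2),
        Fz (p 0) * Real.sin ((m : ℝ) * p 1 + (n : ℝ) * p 2)])
    (hPi1 : ∀ p : E3, Pi1 p = G (p 0) * Real.sin ((m : ℝ) * p 1 + (n : ℝ) * p 2)) :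
    ((∀ p : E3, div3 B1 p = 0) ∧
     (∀ p : E3, grad3 Pi1 p = fderiv ℝ B1 p (B0 p) + fderiv ℝ B0 p (B1 p)))
    ↔ (∀ x : ℝ,
        deriv Fx x + (m : ℝ) * Fy x + (n : ℝ) * Fz x = 0 ∧
        deriv G x = -(n : ℝ) * F0 x * Fx x ∧
        (m : ℝ) * G x = (n : ℝ) * F0 x * Fy x ∧
        (n : ℝ) * G x = (n : ℝ) * F0 x * Fz x + deriv F0 x * Fx x) := by
  have hB0' : B0 = fun p => ![0, 0, F0 (p 0)] := funext hB0
  have hB1' : B1 = fun p => ![Fx (p 0) * Real.cos ((m : ℝ) * p 1 + (n : ℝ) * p 2),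
        Fy (p 0) * Real.sin ((m : ℝ) * p 1 + (n : ℝ) * p 2),
        Fz (p 0) * Real.sin ((m : ℝ) * p 1 + (n : ℝ) * p 2)] := funext hB1
  have hPi1' : Pi1 = fun p => G (p 0) * Real.sin ((m : ℝ) * p 1 + (n : ℝ) * p 2) := funext hPi1
  subst hB0' hB1' hPi1'
  have hsin : ∀ t : ℝ, HasDerivAt Real.sin (Real.cos t) t := Real.hasDerivAt_sin
  have hcos : ∀ t : ℝ, HasDerivAt Real.cos (-Real.sin t) t := Real.hasDerivAt_cos
  have dF0 := hF0.differentiable one_ne_zero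
  have dFx := hFx.differentiable one_ne_zero
  have dFy := hFy.differentiable one_ne_zero
  have dFz := hFz.differentiable one_ne_zero
  have dG := hG.differentiable one_ne_zero
  set w : E3 → ℝ := fun p => (m : ℝ) * p 1 + (n : ℝ) * p 2 with hw
  -- divergence formula
  have hdiv : ∀ p : E3, div3 (fun p => ![Fx (p 0) * Real.cos (w p),
      Fy (p 0) * Real.sin (w p), Fz (p 0) * Real.sin (w p)]) p
      = (deriv Fx (p 0) + (m : ℝ) * Fy (p 0) + (n : ℝ) * Fz (p 0)) * Real.cos (w p) := by
    intro p
    rw [div3, Fin.sum_univ_three]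
    simp only [Matrix.cons_val_zero, Matrix.cons_val_one, Matrix.head_cons,
      Matrix.cons_val_two, Matrix.tail_cons]
    rw [fderiv_mode_apply (m : ℝ) (n : ℝ) Fx Real.cos (fun t => -Real.sin t) dFx hcos,
      fderiv_mode_apply (m : ℝ) (n : ℝ) Fy Real.sin Real.cos dFy hsin,
      fderiv_mode_apply (m : ℝ) (n : ℝ) Fz Real.sin Real.cos dFz hsin]
    obtain ⟨⟨a1, a2, a3⟩, ⟨b1, b2, b3⟩, c1, c2, c3⟩ := e3_val
    rw [a1, a2, a3, b1, b2, b3, c1, c2, c3]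
    ring
  -- gradient formula
  have hgrad : ∀ p : E3, grad3 (fun p => G (p 0) * Real.sin (w p)) p
      = ![deriv G (p 0) * Real.sin (w p), (m : ℝ) * G (p 0) * Real.cos (w p),
          (n : ℝ) * G (p 0) * Real.cos (w p)] := by
    intro p
    funext i
    fin_cases i <;>
    · show fderiv ℝ (fun q : E3 => G (q 0) * Real.sin ((m:ℝ) * q 1 + (n:ℝ) * q 2)) p (e3 _) = _
      rw [fderiv_mode_apply (m : ℝ) (n : ℝ) G Real.sin Real.cos dG hsin]
      simp [e3, Pi.single_apply, hw]
      try ring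
  -- RHS formula
  have hrhs : ∀ p : E3,
      fderiv ℝ (fun p => ![Fx (p 0) * Real.cos (w p), Fy (p 0) * Real.sin (w p),
          Fz (p 0) * Real.sin (w p)]) p (![0, 0, F0 (p 0)])
        + fderiv ℝ (fun p : E3 => ![(0:ℝ), 0, F0 (p 0)]) p
            (![Fx (p 0) * Real.cos (w p), Fy (p 0) * Real.sin (w p), Fz (p 0) * Real.sin (w p)])
      = ![-(n : ℝ) * F0 (p 0) * Fx (p 0) * Real.sin (w p),
          (n : ℝ) * F0 (p 0) * Fy (p 0) * Real.cos (w p),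
          (n : ℝ) * F0 (p 0) * Fz (p 0) * Real.cos (w p)
            + deriv F0 (p 0) * Fx (p 0) * Real.cos (w p)] := by
    intro p
    obtain ⟨⟨a1, a2, a3⟩, ⟨b1, b2, b3⟩, c1, c2, c3⟩ := e3_val
    have hd1 : ∀ i : Fin 3, DifferentiableAt ℝ
        (fun q : E3 => (![Fx (q 0) * Real.cos (w q), Fy (q 0) * Real.sin (w q),
          Fz (q 0) * Real.sin (w q)] : E3) i) p := by
      intro i
      fin_cases i <;> simp only [Matrix.cons_val_zero, Matrix.cons_val_one, Matrix.head_cons,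
        Matrix.cons_val_two, Matrix.tail_cons, Fin.mk_one, Fin.mk_zero]
      · exact diff_mode (m : ℝ) (n : ℝ) Fx Real.cos (fun t => -Real.sin t) dFx hcos p
      · exact diff_mode (m : ℝ) (n : ℝ) Fy Real.sin Real.cos dFy hsin p
      · exact diff_mode (m : ℝ) (n : ℝ) Fz Real.sin Real.cos dFz hsin p
    have hd2 : ∀ i : Fin 3, DifferentiableAt ℝ
        (fun q : E3 => (![(0:ℝ), 0, F0 (q 0)] : E3) i) p := by
      intro i
      fin_cases i <;> simp only [Matrix.cons_val_zero, Matrix.cons_val_one, Matrix.head_cons,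
        Matrix.cons_val_two, Matrix.tail_cons, Fin.mk_one, Fin.mk_zero]
      · exact differentiableAt_const 0
      · exact differentiableAt_const 0
      · exact (hasF_proj 0 p F0 (dF0 _)).differentiableAt
    rw [fderiv_pi hd1, fderiv_pi hd2]
    funext i
    simp only [Pi.add_apply, ContinuousLinearMap.pi_apply]
    fin_cases i <;>
      simp only [fin3_mk_two, Matrix.cons_val_zero, Matrix.cons_val_one, Matrix.head_cons,
        Matrix.cons_val_two, Matrix.tail_cons, Fin.mk_one, Fin.mk_zero]
    · rw [fderiv_mode_apply (m : ℝ) (n : ℝ) Fx Real.cos (fun t => -Real.sin t) dFx hcos,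
        fderiv_const_apply]
      simp only [Matrix.cons_val_zero, Matrix.cons_val_one, Matrix.head_cons,
        Matrix.cons_val_two, Matrix.tail_cons, ContinuousLinearMap.zero_apply]
      ring
    · rw [fderiv_mode_apply (m : ℝ) (n : ℝ) Fy Real.sin Real.cos dFy hsin, fderiv_const_apply]
      simp only [Matrix.cons_val_zero, Matrix.cons_val_one, Matrix.head_cons,
        Matrix.cons_val_two, Matrix.tail_cons, ContinuousLinearMap.zero_apply]
      ring
    · rw [fderiv_mode_apply (m : ℝ) (n : ℝ) Fz Real.sin Real.cos dFz hsin,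
        (hasF_proj 0 p F0 (dF0 _)).fderiv]
      simp only [Matrix.cons_val_zero, Matrix.cons_val_one, Matrix.head_cons,
        Matrix.cons_val_two, Matrix.tail_cons, ContinuousLinearMap.smul_apply,
        ContinuousLinearMap.proj_apply, smul_eq_mul, ContinuousLinearMap.zero_apply]
      ring
  -- point construction
  have hpt : ∀ x t : ℝ, ∃ p : E3, p 0 = x ∧ w p = t := by
    intro x t
    rcases eq_or_ne m 0 with hm | hm
    · have hn : n ≠ 0 := by
        rintro rfl; exact hmn (by rw [hm])
      refine ⟨![x, 0, t / n], by simp, ?_⟩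
      have : (n : ℝ) ≠ 0 := Int.cast_ne_zero.mpr hn
      simp [hw]
      field_simp
    · refine ⟨![x, t / m, 0], by simp, ?_⟩
      have : (m : ℝ) ≠ 0 := Int.cast_ne_zero.mpr hm
      simp [hw]
      field_simp
  constructor
  · rintro ⟨H1, H2⟩ x
    obtain ⟨p0, hp00, hp0w⟩ := hpt x 0
    obtain ⟨p1, hp10, hp1w⟩ := hpt x (Real.pi / 2)
    have h1 := H1 p0
    rw [hdiv p0, hp00, hp0w] at h1
    simp [Real.cos_zero] at h1
    have h2 := H2 p0
    rw [hgrad p0, hrhs p0, hp00, hp0w] at h2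
    have h2a := congrFun h2 1
    have h2b := congrFun h2 2
    simp [Real.cos_zero, Real.sin_zero] at h2a h2b
    have h3 := H2 p1
    rw [hgrad p1, hrhs p1, hp10, hp1w] at h3
    have h3a := congrFun h3 0
    simp [Real.cos_pi_div_two, Real.sin_pi_div_two] at h3a
    refine ⟨h1, by linarith [h3a], by linarith [h2a], by linarith [h2b]⟩
  · intro H
    constructor
    · intro p
      rw [hdiv p, (H (p 0)).1, zero_mul]
    · intro p
      rw [hgrad p, hrhs p]
      obtain ⟨-, h2, h3, h4⟩ := H (p 0)
      funext i
      fin_cases i <;>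
        simp only [fin3_mk_two, Matrix.cons_val_zero, Matrix.cons_val_one, Matrix.head_cons,
          Matrix.cons_val_two, Matrix.tail_cons, Fin.mk_one, Fin.mk_zero]
      · linear_combination Real.sin (w p) * h2
      · linear_combination Real.cos (w p) * h3
      · linear_combination Real.cos (w p) * h4
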